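/- Let E : Ring → AbGroup be a split-exact functor (i.e. E sends split short exact sequences of rings to split short exact sequences of abelian groups). If φ, ψ : A → B are ring homomorphisms with φ(x)ψ(y) = ψ(x)φ(y) = 0 for all x, y ∈ A, then the pointwise sum φ + ψ is a ring homomorphism and E(φ + ψ) = E(φ) + E(ψ). -/

import Mathlib

/-- A functor `E` from (possibly non-unital) rings to abelian groups. -/
structure AbGroupValuedFunctor where
  obj : (A : Type) → [inst : NonUnitalRing A] → Type
  grp : (A : Type) → [inst : NonUnitalRing A] → AddCommGroup (obj A)
  map : {A B : Type} → [instA : NonUnitalRing A] → [instB : NonUnitalRing B] →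
    (A →ₙ+* B) → obj A → obj B
  map_id : ∀ (A : Type) [inst : NonUnitalRing A], map (NonUnitalRingHom.id A) = id
  map_comp : ∀ {A B C : Type} [NonUnitalRing A] [NonUnitalRing B] [NonUnitalRing C]
    (f : A →ₙ+* B) (g : B →ₙ+* C), map (g.comp f) = map g ∘ map f
  map_add : ∀ {A B : Type} [NonUnitalRing A] [NonUnitalRing B] (f : A →ₙ+* B),
    letI := grp A; letI := grp B;
    ∀ x y : obj A, map f (x + y) = map f x + map f y

/-- `E` is split-exact: every split extension `0 → I → D → A → 0` of rings
(with `i` injective, `ker p = range i`, and a ring homomorphism section `s`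
of `p`) is carried to a (split) short exact sequence of abelian groups. -/
def AbGroupValuedFunctor.IsSplitExact (F : AbGroupValuedFunctor) : Prop :=
  ∀ (I D A : Type) [NonUnitalRing I] [NonUnitalRing D] [NonUnitalRing A]
    (i : I →ₙ+* D) (p : D →ₙ+* A) (s : A →ₙ+* D),
    Function.Injective i → (∀ d : D, p d = 0 ↔ d ∈ Set.range i) →
    p.comp s = NonUnitalRingHom.id A →
    letI := F.grp I; letI := F.grp D; letI := F.grp A;
    Function.Injective (F.map i) ∧ Function.Surjective (F.map p) ∧
      ∀ x, F.map p x = 0 ↔ x ∈ Set.range (F.map i)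

namespace AbGroupValuedFunctor
variable (F : AbGroupValuedFunctor)

theorem map_zero_elt {X Y : Type} [NonUnitalRing X] [NonUnitalRing Y] (f : X →ₙ+* Y) :
    letI := F.grp X; letI := F.grp Y; F.map f 0 = 0 := by
  letI := F.grp X; letI := F.grp Y
  have h := F.map_add f 0 0
  rw [add_zero] at h
  exact (left_eq_add.mp h)

theorem map_sub_elt {X Y : Type} [NonUnitalRing X] [NonUnitalRing Y] (f : X →ₙ+* Y) :
    letI := F.grp X; letI := F.grp Y;
    ∀ x y, F.map f (x - y) = F.map f x - F.map f y := by
  letI := F.grp X; letI := F.grp Y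
  intro x y
  have h := F.map_add f (x - y) y
  rw [sub_add_cancel] at h
  exact eq_sub_of_add_eq h.symm

/-- A split-exact functor sends the zero homomorphism to the zero map. -/
theorem map_zeroHom (hF : F.IsSplitExact) {X Y : Type} [NonUnitalRing X] [NonUnitalRing Y] :
    letI := F.grp X; letI := F.grp Y;
    ∀ z, F.map (0 : X →ₙ+* Y) z = 0 := by
  letI := F.grp X; letI := F.grp Y; letI := F.grp PUnit
  intro z
  -- the zero hom factors through the zero ring `PUnit`
  have hfac : (0 : X →ₙ+* Y) = (0 : PUnit →ₙ+* Y).comp (0 : X →ₙ+* PUnit) := by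
    ext x; rfl
  -- split exactness of `0 → X → X → PUnit → 0` shows `F.map (0 : X →ₙ+* PUnit) = 0`
  obtain ⟨-, -, hker⟩ := hF X X PUnit (NonUnitalRingHom.id X) (0 : X →ₙ+* PUnit)
      (0 : PUnit →ₙ+* X)
      (fun a b h => h)
      (fun d => ⟨fun _ => ⟨d, rfl⟩, fun _ => Subsingleton.elim _ _⟩)
      (by ext x <;> exact Subsingleton.elim _ _)
  have h0 : F.map (0 : X →ₙ+* PUnit) z = 0 := by
    refine (hker z).mpr ?_
    exact ⟨z, by rw [F.map_id]; rfl⟩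
  rw [hfac, F.map_comp, Function.comp_apply, h0]
  exact F.map_zero_elt _

end AbGroupValuedFunctor

/-- Let `E` be a split-exact functor from rings to abelian groups.  If
`φ, ψ : A → B` are ring homomorphisms with `φ(x)ψ(y) = ψ(x)φ(y) = 0` for all
`x, y`, then the pointwise sum `φ + ψ` is a ring homomorphism and
`E(φ + ψ) = E(φ) + E(ψ)`. -/
theorem splitExact_functor_additive_on_orthogonal
    (F : AbGroupValuedFunctor) (hF : F.IsSplitExact)
    (A B : Type) [NonUnitalRing A] [NonUnitalRing B]
    (φ ψ : A →ₙ+* B)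
    (h1 : ∀ x y : A, φ x * ψ y = 0) (h2 : ∀ x y : A, ψ x * φ y = 0) :
    ∃ χ : A →ₙ+* B, (∀ x, χ x = φ x + ψ x) ∧
      (letI := F.grp A; letI := F.grp B;
        ∀ z : F.obj A, F.map χ z = F.map φ z + F.map ψ z) := by
  letI := F.grp A; letI := F.grp B; letI := F.grp (A × A)
  -- the "sum" homomorphism `A × A → B`, using orthogonality for multiplicativity
  set m : A × A →ₙ+* B :=
    { toFun := fun c => φ c.1 + ψ c.2
      map_mul' := by
        intro c d
        show φ (c.1 * d.1) + ψ (c.2 * d.2) = (φ c.1 + ψ c.2) * (φ d.1 + ψ d.2)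
        rw [map_mul, map_mul, add_mul, mul_add, mul_add, h1 c.1 d.2, h2 c.2 d.1, add_zero, zero_add]
      map_zero' := by simp
      map_add' := by
        intro c d
        show φ (c.1 + d.1) + ψ (c.2 + d.2) = _
        rw [map_add, map_add]; abel } with hm
  -- structural homomorphisms of the split extension `0 → A → A × A → A → 0`
  set i : A →ₙ+* A × A := (NonUnitalRingHom.id A).prod 0 with hi
  set s : A →ₙ+* A × A := (0 : A →ₙ+* A).prod (NonUnitalRingHom.id A) with hs
  set p : A × A →ₙ+* A := NonUnitalRingHom.snd A A with hp
  set q : A × A →ₙ+* A := NonUnitalRingHom.fst A A with hq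
  set Δ : A →ₙ+* A × A := (NonUnitalRingHom.id A).prod (NonUnitalRingHom.id A) with hΔ
  set χ : A →ₙ+* B := m.comp Δ with hχ
  refine ⟨χ, fun x => rfl, ?_⟩
  intro w
  obtain ⟨inj_i, -, hker⟩ := hF A (A × A) A i p s
    (fun a b h => congrArg Prod.fst h)
    (fun d => ⟨fun h => ⟨d.1, Prod.ext rfl h.symm⟩,
               fun ⟨a, ha⟩ => by rw [← ha]; rfl⟩)
    (by ext x; rfl)
  -- key identity : `F.map Δ w = F.map i w + F.map s w`
  have hpΔ : F.map p (F.map Δ w) = w := by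
    have : p.comp Δ = NonUnitalRingHom.id A := by ext x; rfl
    rw [← Function.comp_apply (f := F.map p), ← F.map_comp, this, F.map_id]; rfl
  have hps : F.map p (F.map s w) = w := by
    have : p.comp s = NonUnitalRingHom.id A := by ext x; rfl
    rw [← Function.comp_apply (f := F.map p), ← F.map_comp, this, F.map_id]; rfl
  have hy : F.map p (F.map Δ w - F.map s w) = 0 := by
    rw [F.map_sub_elt, hpΔ, hps, sub_self]
  obtain ⟨u, hu⟩ := (hker _).mp hy
  -- identify `u` by applying `F.map q`
  have hqi : F.map q (F.map i u) = u := by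
    have : q.comp i = NonUnitalRingHom.id A := by ext x; rfl
    rw [← Function.comp_apply (f := F.map q), ← F.map_comp, this, F.map_id]; rfl
  have hqΔ : F.map q (F.map Δ w) = w := by
    have : q.comp Δ = NonUnitalRingHom.id A := by ext x; rfl
    rw [← Function.comp_apply (f := F.map q), ← F.map_comp, this, F.map_id]; rfl
  have hqs : F.map q (F.map s w) = 0 := by
    have : q.comp s = (0 : A →ₙ+* A) := by ext x; rfl
    rw [← Function.comp_apply (f := F.map q), ← F.map_comp, this]
    exact F.map_zeroHom hF _
  have huw : u = w := by
    rw [← hqi, hu, F.map_sub_elt, hqΔ, hqs, sub_zero]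
  have key : F.map Δ w = F.map i w + F.map s w := by
    rw [huw] at hu
    rw [hu, sub_add_cancel]
  -- push through `m`
  have hmi : m.comp i = φ := by ext x; show φ x + ψ 0 = φ x; rw [map_zero, add_zero]
  have hms : m.comp s = ψ := by ext x; show φ 0 + ψ x = ψ x; rw [map_zero, zero_add]
  calc F.map χ w = F.map m (F.map Δ w) := by
        rw [hχ, F.map_comp]; rfl
    _ = F.map m (F.map i w) + F.map m (F.map s w) := by rw [key, F.map_add]
    _ = F.map φ w + F.map ψ w := by
        rw [← Function.comp_apply (f := F.map m) (g := F.map i), ← F.map_comp, hmi,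
          ← Function.comp_apply (f := F.map m) (g := F.map s), ← F.map_comp, hms]
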